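/- The vacuum vector state tr(a) = ⟨a δ_e, δ_e⟩ is faithful on the von Neumann algebra M generated by the semicircular elements L_j + L_j*: if a ∈ M satisfies ⟨(a* ∘ a) δ_e, δ_e⟩ = 0, then a = 0. -/

import Mathlib

noncomputable section

/-- The Hilbert space `ℓ²(FreeMonoid (Fin N), ℂ)`. -/
abbrev FMH (N : ℕ) : Type := lp (fun _ : FreeMonoid (Fin N) => ℂ) 2

/-- The standard orthonormal basis vector `δ_w` at the word `w`. -/
noncomputable def delta (N : ℕ) (w : FreeMonoid (Fin N)) : FMH N :=
  letI : DecidableEq (FreeMonoid (Fin N)) := Classical.decEq _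
  lp.single 2 w 1

/-- The set of the semicircular generators `L_j + L_j*`, `j = 1, …, N`. -/
def semicircSet (N : ℕ) (L : FreeMonoid (Fin N) → (FMH N →L[ℂ] FMH N)) :
    Set (FMH N →L[ℂ] FMH N) :=
  {x | ∃ j : Fin N, x = L (FreeMonoid.of j) + ContinuousLinearMap.adjoint (L (FreeMonoid.of j))}

/-- The von Neumann algebra generated by `{L_j + L_j*}`: the double commutant of this
(self-adjoint) set inside the bounded operators on `H`. -/
def vnAlg (N : ℕ) (L : FreeMonoid (Fin N) → (FMH N →L[ℂ] FMH N)) :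
    StarSubalgebra ℂ (FMH N →L[ℂ] FMH N) :=
  StarSubalgebra.centralizer ℂ
    ((StarSubalgebra.centralizer ℂ (semicircSet N L) : StarSubalgebra ℂ (FMH N →L[ℂ] FMH N)) :
      Set (FMH N →L[ℂ] FMH N))

namespace VacuumAux

open ContinuousLinearMap FreeMonoid

variable {N : ℕ}

lemma two_toReal_pos : (0:ℝ) < (2:ENNReal).toReal := by norm_num

lemma delta_apply [DecidableEq (FreeMonoid (Fin N))] (w v : FreeMonoid (Fin N)) :
    (delta N w : ∀ _ : FreeMonoid (Fin N), ℂ) v = if v = w then 1 else 0 := by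
  unfold delta
  rw [@lp.single_apply _ _ _ (Classical.decEq _) 2 w 1 v]
  by_cases h : v = w
  · subst h; simp
  · simp [h]

lemma inner_delta_left (x : FMH N) (v : FreeMonoid (Fin N)) :
    (inner ℂ (delta N v) x : ℂ) = x v := by
  classical
  unfold delta
  rw [lp.inner_single_left]
  simp [RCLike.inner_apply]

lemma inner_delta_right (x : FMH N) (v : FreeMonoid (Fin N)) :
    (inner ℂ x (delta N v) : ℂ) = starRingEnd ℂ (x v) := by
  classical
  unfold delta
  rw [lp.inner_single_right]
  simp [RCLike.inner_apply]

lemma adjoint_apply_coord (A : FMH N →L[ℂ] FMH N) (x : FMH N) (v : FreeMonoid (Fin N)) :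
    (ContinuousLinearMap.adjoint A x : ∀ _ : FreeMonoid (Fin N), ℂ) v
      = inner ℂ (A (delta N v)) x := by
  rw [← inner_delta_left (ContinuousLinearMap.adjoint A x) v,
    ContinuousLinearMap.adjoint_inner_right]

lemma memℓp_comp (x : FMH N) {f : FreeMonoid (Fin N) → FreeMonoid (Fin N)}
    (hf : Function.Injective f) : Memℓp (fun w => x (f w)) (2:ENNReal) :=
  memℓp_gen (((lp.memℓp x).summable two_toReal_pos).comp_injective hf)

def compLM (f : FreeMonoid (Fin N) → FreeMonoid (Fin N)) (hf : Function.Injective f) :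
    FMH N →ₗ[ℂ] FMH N where
  toFun := fun x => (⟨fun w => x (f w), memℓp_comp x hf⟩ : FMH N)
  map_add' := fun x y => by
    apply lp.ext
    funext w
    simp [lp.coeFn_add]; rfl
  map_smul' := fun c x => by
    apply lp.ext
    funext w
    simp [lp.coeFn_smul]

lemma compLM_coe (f : FreeMonoid (Fin N) → FreeMonoid (Fin N)) (hf : Function.Injective f)
    (x : FMH N) : (compLM f hf x : ∀ _ : FreeMonoid (Fin N), ℂ) = fun w => x (f w) := rfl

def compOp (f : FreeMonoid (Fin N) → FreeMonoid (Fin N)) (hf : Function.Injective f) :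
    FMH N →L[ℂ] FMH N :=
  LinearMap.mkContinuous (compLM f hf) 1
    (fun x => by
      rw [one_mul]
      apply lp.norm_le_of_tsum_le two_toReal_pos (norm_nonneg _)
      rw [lp.norm_rpow_eq_tsum two_toReal_pos x]
      simp only [compLM_coe]
      refine Summable.tsum_le_tsum_of_inj f hf (fun c _ => by positivity) (fun w => le_rfl)
        (((lp.memℓp x).summable two_toReal_pos).comp_injective hf)
        ((lp.memℓp x).summable two_toReal_pos))

lemma compOp_apply (f : FreeMonoid (Fin N) → FreeMonoid (Fin N)) (hf : Function.Injective f)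
    (x : FMH N) (w : FreeMonoid (Fin N)) :
    (compOp f hf x : ∀ _ : FreeMonoid (Fin N), ℂ) w = x (f w) := rfl


def Topp (N : ℕ) (j : Fin N) : FMH N →L[ℂ] FMH N :=
  compOp (fun w => w * FreeMonoid.of j) (mul_left_injective _)

def Ropp (N : ℕ) (j : Fin N) : FMH N →L[ℂ] FMH N :=
  ContinuousLinearMap.adjoint (Topp N j)

lemma Topp_apply (j : Fin N) (x : FMH N) (w : FreeMonoid (Fin N)) :
    (Topp N j x : ∀ _ : FreeMonoid (Fin N), ℂ) w = x (w * FreeMonoid.of j) := rfl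

lemma single_eq_smul_delta [DecidableEq (FreeMonoid (Fin N))]
    (w : FreeMonoid (Fin N)) (c : ℂ) :
    (lp.single 2 w c : FMH N) = c • delta N w := by
  apply lp.ext
  funext v
  rw [lp.coeFn_smul]
  simp only [Pi.smul_apply, delta_apply, lp.single_apply, smul_eq_mul]
  by_cases h : v = w
  · subst h; simp
  · simp [h]

lemma ext_delta {T S : FMH N →L[ℂ] FMH N}
    (h : ∀ w, T (delta N w) = S (delta N w)) : T = S := by
  classical
  refine ContinuousLinearMap.ext fun x => ?_
  have hx : HasSum (fun w => (lp.single 2 w (x w) : FMH N)) x :=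
    lp.hasSum_single (by norm_num) x
  have hT : HasSum (fun w => T (lp.single 2 w (x w))) (T x) := hx.mapL T
  have hS : HasSum (fun w => S (lp.single 2 w (x w))) (S x) := hx.mapL S
  have he : (fun w => T (lp.single 2 w (x w))) = fun w => S (lp.single 2 w (x w)) := by
    funext w
    rw [single_eq_smul_delta, map_smul, map_smul, h]
  rw [he] at hT
  exact hT.unique hS

lemma of_mul_eq_of_mul_iff (c i : Fin N) (t v : FreeMonoid (Fin N)) :
    FreeMonoid.of c * t = FreeMonoid.of i * v ↔ c = i ∧ t = v := by
  constructor
  · intro h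
    have h' := congrArg FreeMonoid.toList h
    simp only [FreeMonoid.toList_of_mul, List.cons.injEq] at h'
    exact ⟨h'.1, FreeMonoid.toList.injective h'.2⟩
  · rintro ⟨rfl, rfl⟩; rfl

lemma mul_of_eq_mul_of_iff (q p : FreeMonoid (Fin N)) (d j : Fin N) :
    q * FreeMonoid.of d = p * FreeMonoid.of j ↔ q = p ∧ d = j := by
  constructor
  · intro h
    have h' := congrArg (fun z => (FreeMonoid.toList z).reverse) h
    simp only [FreeMonoid.toList_mul, FreeMonoid.toList_of, List.reverse_append,
      List.reverse_cons, List.reverse_nil, List.nil_append, List.cons_append,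
      List.cons.injEq] at h'
    refine ⟨?_, h'.1⟩
    have := List.reverse_injective h'.2
    exact FreeMonoid.toList.injective this
  · rintro ⟨rfl, rfl⟩; rfl

lemma Lstar_apply (L : FreeMonoid (Fin N) → (FMH N →L[ℂ] FMH N))
    (hL : ∀ w h : FreeMonoid (Fin N), L w (delta N h) = delta N (w * h))
    (i : Fin N) (x : FMH N) (v : FreeMonoid (Fin N)) :
    (ContinuousLinearMap.adjoint (L (FreeMonoid.of i)) x
      : ∀ _ : FreeMonoid (Fin N), ℂ) v = x (FreeMonoid.of i * v) := by
  rw [adjoint_apply_coord, hL, inner_delta_left]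

lemma L_delta_list (L : FreeMonoid (Fin N) → (FMH N →L[ℂ] FMH N))
    (hL : ∀ w h : FreeMonoid (Fin N), L w (delta N h) = delta N (w * h))
    (i : Fin N) (l : List (Fin N)) :
    L (FreeMonoid.of i) (delta N (FreeMonoid.ofList l))
      = delta N (FreeMonoid.ofList (i :: l)) := by
  rw [hL, ← FreeMonoid.ofList_cons]

lemma Lstar_delta_nil (L : FreeMonoid (Fin N) → (FMH N →L[ℂ] FMH N))
    (hL : ∀ w h : FreeMonoid (Fin N), L w (delta N h) = delta N (w * h))
    (i : Fin N) :
    ContinuousLinearMap.adjoint (L (FreeMonoid.of i)) (delta N (FreeMonoid.ofList [])) = 0 := by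
  classical
  apply lp.ext
  funext v
  rw [Lstar_apply L hL, delta_apply]
  have hne : FreeMonoid.of i * v ≠ FreeMonoid.ofList [] := by
    intro h
    have := congrArg FreeMonoid.toList h
    simp [FreeMonoid.toList_of_mul] at this
  simp [hne]

lemma Lstar_delta_cons (L : FreeMonoid (Fin N) → (FMH N →L[ℂ] FMH N))
    (hL : ∀ w h : FreeMonoid (Fin N), L w (delta N h) = delta N (w * h))
    (i c : Fin N) (l : List (Fin N)) :
    ContinuousLinearMap.adjoint (L (FreeMonoid.of i)) (delta N (FreeMonoid.ofList (c :: l)))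
      = if c = i then delta N (FreeMonoid.ofList l) else 0 := by
  classical
  apply lp.ext
  funext v
  rw [Lstar_apply L hL, delta_apply, FreeMonoid.ofList_cons]
  by_cases hci : c = i
  · subst hci
    rw [if_pos rfl, delta_apply]
    by_cases hv : v = FreeMonoid.ofList l
    · subst hv; simp [of_mul_eq_of_mul_iff]
    · have hne : ¬ (FreeMonoid.of c * v = FreeMonoid.of c * FreeMonoid.ofList l) := by
        rw [of_mul_eq_of_mul_iff]; tauto
      simp [hne, hv]
  · rw [if_neg hci]
    have hne : ¬ (FreeMonoid.of i * v = FreeMonoid.of c * FreeMonoid.ofList l) := by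
      rw [of_mul_eq_of_mul_iff]
      rintro ⟨h1, -⟩
      exact hci h1.symm
    simp [hne]

lemma Topp_delta_nil (j : Fin N) : Topp N j (delta N (FreeMonoid.ofList [])) = 0 := by
  classical
  apply lp.ext
  funext v
  rw [Topp_apply, delta_apply]
  have hne : v * FreeMonoid.of j ≠ FreeMonoid.ofList [] := by
    intro h
    have := congrArg FreeMonoid.toList h
    simp [FreeMonoid.toList_mul] at this
  simp [hne]

lemma Topp_delta_concat (j d : Fin N) (l : List (Fin N)) :
    Topp N j (delta N (FreeMonoid.ofList (l ++ [d])))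
      = if d = j then delta N (FreeMonoid.ofList l) else 0 := by
  classical
  apply lp.ext
  funext v
  rw [Topp_apply, delta_apply]
  have hform : FreeMonoid.ofList (l ++ [d]) = FreeMonoid.ofList l * FreeMonoid.of d := by
    rw [FreeMonoid.ofList_append, FreeMonoid.ofList_singleton]
  rw [hform]
  by_cases hdj : d = j
  · subst hdj
    rw [if_pos rfl, delta_apply]
    by_cases hv : v = FreeMonoid.ofList l
    · subst hv; simp [mul_of_eq_mul_of_iff]
    · have hne : ¬ (v * FreeMonoid.of d = FreeMonoid.ofList l * FreeMonoid.of d) := by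
        rw [mul_of_eq_mul_of_iff]; tauto
      simp [hne, hv]
  · rw [if_neg hdj]
    have hne : ¬ (v * FreeMonoid.of j = FreeMonoid.ofList l * FreeMonoid.of d) := by
      rw [mul_of_eq_mul_of_iff]
      rintro ⟨-, h2⟩
      exact hdj h2.symm
    simp [hne]

lemma Ropp_delta (j : Fin N) (l : List (Fin N)) :
    Ropp N j (delta N (FreeMonoid.ofList l)) = delta N (FreeMonoid.ofList (l ++ [j])) := by
  classical
  apply lp.ext
  funext v
  rw [Ropp, adjoint_apply_coord, inner_delta_right, Topp_apply, delta_apply (N := N), delta_apply (N := N)]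
  have hform : FreeMonoid.ofList (l ++ [j]) = FreeMonoid.ofList l * FreeMonoid.of j := by
    rw [FreeMonoid.ofList_append, FreeMonoid.ofList_singleton]
  rw [hform]
  by_cases hv : FreeMonoid.ofList l * FreeMonoid.of j = v
  · rw [if_pos hv, if_pos hv.symm]; simp
  · rw [if_neg hv, if_neg (fun h => hv h.symm)]; simp


lemma comm_main (L : FreeMonoid (Fin N) → (FMH N →L[ℂ] FMH N))
    (hL : ∀ w h : FreeMonoid (Fin N), L w (delta N h) = delta N (w * h))
    (i j : Fin N) :
    (L (FreeMonoid.of i) + ContinuousLinearMap.adjoint (L (FreeMonoid.of i)))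
        * (Ropp N j + Topp N j)
      = (Ropp N j + Topp N j)
        * (L (FreeMonoid.of i) + ContinuousLinearMap.adjoint (L (FreeMonoid.of i))) := by
  classical
  have hsingle : ∀ d : Fin N, Topp N j (delta N (FreeMonoid.ofList [d]))
      = if d = j then delta N (FreeMonoid.ofList []) else 0 := fun d => by
    simpa using Topp_delta_concat j d []
  have hpair : ∀ x y : Fin N, Topp N j (delta N (FreeMonoid.ofList [x, y]))
      = if y = j then delta N (FreeMonoid.ofList [x]) else 0 := fun x y => by
    simpa using Topp_delta_concat j y [x]
  have key : ∀ l : List (Fin N),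
      ((L (FreeMonoid.of i) + ContinuousLinearMap.adjoint (L (FreeMonoid.of i)))
          * (Ropp N j + Topp N j)) (delta N (FreeMonoid.ofList l))
        = ((Ropp N j + Topp N j)
          * (L (FreeMonoid.of i) + ContinuousLinearMap.adjoint (L (FreeMonoid.of i))))
            (delta N (FreeMonoid.ofList l)) := ?_
  · apply ext_delta
    intro h
    exact key (FreeMonoid.toList h)
  intro l
  rw [ContinuousLinearMap.mul_apply, ContinuousLinearMap.mul_apply]
  rcases l with _ | ⟨c, t⟩
  · -- l = []
    by_cases hij : i = j
    · simp only [ContinuousLinearMap.add_apply, map_add, map_zero, add_zero, zero_add,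
        Ropp_delta, Topp_delta_nil, Topp_delta_concat, hsingle, hpair,
        L_delta_list L hL, Lstar_delta_nil L hL, Lstar_delta_cons L hL,
        List.cons_append, List.append_assoc, List.singleton_append,
        List.nil_append, List.append_nil, eq_self_iff_true, if_true, if_false, hij] <;> abel
    · have hij' : ¬ j = i := fun hh => hij hh.symm
      simp only [ContinuousLinearMap.add_apply, map_add, map_zero, add_zero, zero_add,
        Ropp_delta, Topp_delta_nil, Topp_delta_concat, hsingle, hpair,
        L_delta_list L hL, Lstar_delta_nil L hL, Lstar_delta_cons L hL,
        List.cons_append, List.append_assoc, List.singleton_append,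
        List.nil_append, List.append_nil, eq_self_iff_true, if_true, if_false, hij, hij'] <;> abel
  · rcases t.eq_nil_or_concat with rfl | ⟨m, d, hmd⟩
    · -- l = [c]
      by_cases hci : c = i <;> by_cases hcj : c = j
      · have hij : i = j := hci.symm.trans hcj
        simp only [hij, ContinuousLinearMap.add_apply, map_add, map_zero, add_zero, zero_add,
        Ropp_delta, Topp_delta_nil, Topp_delta_concat, hsingle, hpair,
        L_delta_list L hL, Lstar_delta_nil L hL, Lstar_delta_cons L hL,
        List.cons_append, List.append_assoc, List.singleton_append,
        List.nil_append, List.append_nil, eq_self_iff_true, if_true, if_false, hci, hcj] <;> abel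
      · have hcj' : ¬ j = c := fun hh => hcj hh.symm
        have hij : ¬ i = j := fun hh => hcj (hci.trans hh)
        have hji : ¬ j = i := fun hh => hij hh.symm
        simp only [hij, hji, ContinuousLinearMap.add_apply, map_add, map_zero, add_zero, zero_add,
        Ropp_delta, Topp_delta_nil, Topp_delta_concat, hsingle, hpair,
        L_delta_list L hL, Lstar_delta_nil L hL, Lstar_delta_cons L hL,
        List.cons_append, List.append_assoc, List.singleton_append,
        List.nil_append, List.append_nil, eq_self_iff_true, if_true, if_false, hci, hcj, hcj'] <;> abel
      · have hci' : ¬ i = c := fun hh => hci hh.symm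
        have hji : ¬ j = i := fun hh => hci (hcj.trans hh)
        have hij : ¬ i = j := fun hh => hji hh.symm
        simp only [hij, hji, ContinuousLinearMap.add_apply, map_add, map_zero, add_zero, zero_add,
        Ropp_delta, Topp_delta_nil, Topp_delta_concat, hsingle, hpair,
        L_delta_list L hL, Lstar_delta_nil L hL, Lstar_delta_cons L hL,
        List.cons_append, List.append_assoc, List.singleton_append,
        List.nil_append, List.append_nil, eq_self_iff_true, if_true, if_false, hci, hci', hcj] <;> abel
      · have hci' : ¬ i = c := fun hh => hci hh.symm
        have hcj' : ¬ j = c := fun hh => hcj hh.symm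
        simp only [ContinuousLinearMap.add_apply, map_add, map_zero, add_zero, zero_add,
        Ropp_delta, Topp_delta_nil, Topp_delta_concat, hsingle, hpair,
        L_delta_list L hL, Lstar_delta_nil L hL, Lstar_delta_cons L hL,
        List.cons_append, List.append_assoc, List.singleton_append,
        List.nil_append, List.append_nil, eq_self_iff_true, if_true, if_false, hci, hci', hcj, hcj'] <;> abel
    · -- l = c :: (m ++ [d])
      rw [List.concat_eq_append] at hmd
      subst hmd
      have hTa : ∀ (x y : Fin N) (l' : List (Fin N)),
          Topp N j (delta N (FreeMonoid.ofList (x :: (l' ++ [y]))))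
            = if y = j then delta N (FreeMonoid.ofList (x :: l')) else 0 := fun x y l' => by
        simpa using Topp_delta_concat j y (x :: l')
      have hTb : ∀ (x x' y : Fin N) (l' : List (Fin N)),
          Topp N j (delta N (FreeMonoid.ofList (x :: x' :: (l' ++ [y]))))
            = if y = j then delta N (FreeMonoid.ofList (x :: x' :: l')) else 0 :=
        fun x x' y l' => by
        simpa using Topp_delta_concat j y (x :: x' :: l')
      by_cases hci : c = i <;> by_cases hdj : d = j
      · simp only [ContinuousLinearMap.add_apply, map_add, map_zero, add_zero, zero_add,
        Ropp_delta, Topp_delta_nil, Topp_delta_concat, hsingle, hpair,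
        L_delta_list L hL, Lstar_delta_nil L hL, Lstar_delta_cons L hL,
        List.cons_append, List.append_assoc, List.singleton_append,
        List.nil_append, List.append_nil, eq_self_iff_true, if_true, if_false, hTa, hTb, hci, hdj] <;> abel
      · have hdj' : ¬ j = d := fun hh => hdj hh.symm
        simp only [ContinuousLinearMap.add_apply, map_add, map_zero, add_zero, zero_add,
        Ropp_delta, Topp_delta_nil, Topp_delta_concat, hsingle, hpair,
        L_delta_list L hL, Lstar_delta_nil L hL, Lstar_delta_cons L hL,
        List.cons_append, List.append_assoc, List.singleton_append,
        List.nil_append, List.append_nil, eq_self_iff_true, if_true, if_false, hTa, hTb, hci, hdj, hdj'] <;> abel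
      · have hci' : ¬ i = c := fun hh => hci hh.symm
        simp only [ContinuousLinearMap.add_apply, map_add, map_zero, add_zero, zero_add,
        Ropp_delta, Topp_delta_nil, Topp_delta_concat, hsingle, hpair,
        L_delta_list L hL, Lstar_delta_nil L hL, Lstar_delta_cons L hL,
        List.cons_append, List.append_assoc, List.singleton_append,
        List.nil_append, List.append_nil, eq_self_iff_true, if_true, if_false, hTa, hTb, hci, hci', hdj] <;> abel
      · have hci' : ¬ i = c := fun hh => hci hh.symm
        have hdj' : ¬ j = d := fun hh => hdj hh.symm
        simp only [ContinuousLinearMap.add_apply, map_add, map_zero, add_zero, zero_add,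
        Ropp_delta, Topp_delta_nil, Topp_delta_concat, hsingle, hpair,
        L_delta_list L hL, Lstar_delta_nil L hL, Lstar_delta_cons L hL,
        List.cons_append, List.append_assoc, List.singleton_append,
        List.nil_append, List.append_nil, eq_self_iff_true, if_true, if_false, hTa, hTb, hci, hci', hdj, hdj'] <;> abel

end VacuumAux

/-- The vacuum vector state is faithful on the von Neumann algebra `M` generated by the
semicircular elements: if `a ∈ M` and `⟨(a* ∘ a) δ_e, δ_e⟩ = 0`, then `a = 0`. -/
theorem vacuum_state_faithful (N : ℕ) (hN : 0 < N)
    (L : FreeMonoid (Fin N) → (FMH N →L[ℂ] FMH N))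
    (hL : ∀ w h : FreeMonoid (Fin N), L w (delta N h) = delta N (w * h))
    (a : FMH N →L[ℂ] FMH N) (ha : a ∈ vnAlg N L)
    (h0 : (inner ℂ (((ContinuousLinearMap.adjoint a).comp a) (delta N 1)) (delta N 1) : ℂ) = 0) :
    a = 0 := by
  classical
  have h1 : a (delta N 1) = 0 := by
    have hz : (inner ℂ (a (delta N 1)) (a (delta N 1)) : ℂ) = 0 := by
      rw [← h0, ContinuousLinearMap.comp_apply, ContinuousLinearMap.adjoint_inner_left]
    exact inner_self_eq_zero.mp hz
  unfold vnAlg at ha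
  rw [StarSubalgebra.mem_centralizer_iff] at ha
  have hmem : ∀ j : Fin N, (VacuumAux.Ropp N j + VacuumAux.Topp N j)
      ∈ StarSubalgebra.centralizer ℂ (semicircSet N L) := by
    intro j
    rw [StarSubalgebra.mem_centralizer_iff]
    intro g hg
    obtain ⟨i, rfl⟩ := hg
    have hstar : star (L (FreeMonoid.of i) + ContinuousLinearMap.adjoint (L (FreeMonoid.of i)))
        = L (FreeMonoid.of i) + ContinuousLinearMap.adjoint (L (FreeMonoid.of i)) := by
      rw [star_add, ContinuousLinearMap.star_eq_adjoint, ContinuousLinearMap.star_eq_adjoint,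
        ContinuousLinearMap.adjoint_adjoint, add_comm]
    refine ⟨VacuumAux.comm_main L hL i j, ?_⟩
    rw [hstar]
    exact VacuumAux.comm_main L hL i j
  have hAcomm : ∀ j : Fin N, (VacuumAux.Ropp N j + VacuumAux.Topp N j) * a
      = a * (VacuumAux.Ropp N j + VacuumAux.Topp N j) :=
    fun j => (ha _ (SetLike.mem_coe.mpr (hmem j))).1
  have hc : ∀ (j : Fin N) (x : FMH N),
      (VacuumAux.Ropp N j + VacuumAux.Topp N j) (a x)
        = a ((VacuumAux.Ropp N j + VacuumAux.Topp N j) x) := by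
    intro j x
    rw [← ContinuousLinearMap.mul_apply, hAcomm j, ContinuousLinearMap.mul_apply]
  have key : ∀ n : ℕ, ∀ l : List (Fin N), l.length ≤ n →
      a (delta N (FreeMonoid.ofList l)) = 0 := by
    intro n
    induction n with
    | zero =>
      intro l hl
      have hnil : l = [] := List.length_eq_zero_iff.mp (Nat.le_zero.mp hl)
      subst hnil
      exact h1
    | succ n ih =>
      intro l hl
      rcases l.eq_nil_or_concat with rfl | ⟨m, d, rfl⟩
      · exact h1
      · simp only [List.concat_eq_append] at hl ⊢
        have hlm : m.length ≤ n := by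
          simp only [List.length_append, List.length_singleton] at hl
          omega
        have hm : a (delta N (FreeMonoid.ofList m)) = 0 := ih m hlm
        have hsplit : delta N (FreeMonoid.ofList (m ++ [d]))
            = (VacuumAux.Ropp N d + VacuumAux.Topp N d) (delta N (FreeMonoid.ofList m))
              - VacuumAux.Topp N d (delta N (FreeMonoid.ofList m)) := by
          rw [ContinuousLinearMap.add_apply, VacuumAux.Ropp_delta]
          abel
        have h2 : a ((VacuumAux.Ropp N d + VacuumAux.Topp N d)
            (delta N (FreeMonoid.ofList m))) = 0 := by
          rw [← hc d, hm, map_zero]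
        have h3 : a (VacuumAux.Topp N d (delta N (FreeMonoid.ofList m))) = 0 := by
          rcases m.eq_nil_or_concat with rfl | ⟨q, c, rfl⟩
          · rw [VacuumAux.Topp_delta_nil, map_zero]
          · simp only [List.concat_eq_append] at hlm ⊢
            rw [VacuumAux.Topp_delta_concat]
            split_ifs
            · refine ih q ?_
              simp only [List.length_append, List.length_singleton] at hlm
              omega
            · rw [map_zero]
        rw [hsplit, map_sub, h2, h3, sub_zero]
  apply VacuumAux.ext_delta
  intro w
  rw [ContinuousLinearMap.zero_apply]
  exact key (FreeMonoid.toList w).length (FreeMonoid.toList w) le_rfl
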